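/- There is an absolute constant C > 0 such that the following holds. Let G be a finite connected symmetric directed multigraph with n vertices and m arcs which is a tree, i.e., pred e ≠ succ e for every arc e and m = 2(n − 1). Let φ be a circulation on G, let δ be a generalized intersection distance measure for φ, let e be an arc, and let B ≥ 1 be an integer. Then there exists an integer x with B ≤ x ≤ 2B such that δ x e e ≤ C. -/

import Mathlib

open SimpleGraph

/-- Discrete intermediate value: if `P a` holds and `P b` fails (`a ≤ b`), there is a
crossing point. -/
lemma stmt13_ivt {P : ℕ → Prop} :
    ∀ b a, a ≤ b → P a → ¬ P b → ∃ s, a ≤ s ∧ s < b ∧ P s ∧ ¬ P (s + 1) := by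
  intro b
  induction b with
  | zero =>
    intro a ha hPa hP0
    interval_cases a
    exact absurd hPa hP0
  | succ b ih =>
    intro a ha hPa hPb1
    have hab : a ≤ b := by
      rcases Nat.eq_or_lt_of_le ha with h | h
      · exact absurd (h ▸ hPa) hPb1
      · omega
    by_cases hPb : P b
    · exact ⟨b, hab, Nat.lt_succ_self b, hPb, hPb1⟩
    · obtain ⟨s, h1, h2, h3, h4⟩ := ih a hab hPa hPb
      exact ⟨s, h1, by omega, h3, h4⟩

/-- A connected graph on `n` vertices has at least `n - 1` edges. -/
lemma stmt13_LB {V : Type} [Fintype V] (H : SimpleGraph V) [Fintype H.edgeSet]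
    (hc : H.Connected) : Fintype.card V - 1 ≤ H.edgeFinset.card := by
  classical
  obtain ⟨root⟩ := hc.nonempty
  have key : ∀ v : V, ∃ u, v ≠ root → H.Adj v u ∧ H.dist root u + 1 = H.dist root v := by
    intro v
    by_cases hv : v = root
    · exact ⟨root, fun h => absurd hv h⟩
    · have hreach : H.Reachable root v := hc root v
      have hdpos : 0 < H.dist root v := hreach.pos_dist_of_ne (Ne.symm hv)
      obtain ⟨p, hp⟩ := hreach.exists_walk_length_eq_dist
      obtain ⟨w, hadj, q, hq⟩ := SimpleGraph.Walk.exists_eq_cons_of_ne hv p.reverse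
      have hlen : q.length + 1 = H.dist root v := by
        have h1 : p.reverse.length = H.dist root v := by
          rw [SimpleGraph.Walk.length_reverse, hp]
        rw [hq] at h1
        simpa using h1
      have hdu : H.dist root w ≤ q.length := by
        have := H.dist_le q.reverse
        simpa using this
      have hdv : H.dist root v ≤ H.dist root w + 1 := by
        have h1 : H.dist root v ≤ H.dist root w + H.dist w v := hc.dist_triangle
        have h2 : H.dist w v = 1 := SimpleGraph.dist_eq_one_iff_adj.mpr hadj.symm
        omega
      exact ⟨w, fun _ => ⟨hadj, by omega⟩⟩
  choose g hg using key
  have hcard : (Finset.univ.erase root).card ≤ H.edgeFinset.card := by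
    apply Finset.card_le_card_of_injOn (fun v => s(v, g v))
    · intro v hv
      have hvne : v ≠ root := Finset.ne_of_mem_erase hv
      exact SimpleGraph.mem_edgeFinset.mpr ((hg v hvne).1)
    · intro v hv v' hv' heq
      have hvne : v ≠ root := by simpa using hv
      have hvne' : v' ≠ root := by simpa using hv'
      rcases Sym2.eq_iff.mp heq with ⟨h1, _⟩ | ⟨h1, h2⟩
      · exact h1
      · exfalso
        have e1 := (hg v hvne).2
        have e2 := (hg v' hvne').2
        rw [h2] at e1
        rw [← h1] at e2
        omega
  rwa [Finset.card_erase_of_mem (Finset.mem_univ root), Finset.card_univ] at hcard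

/-- Key combinatorial lemma: any closed walk of length `L ≥ B` in a graph all of whose
edges are bridges revisits a vertex after between `B` and `2B` steps. -/
lemma stmt13_walk {V : Type} (G : SimpleGraph V)
    (hbr : ∀ a b : V, G.Adj a b → ¬ (G \ SimpleGraph.fromEdgeSet {s(a, b)}).Reachable a b) :
    ∀ L : ℕ, ∀ v : ℕ → V, (∀ i, i < L → G.Adj (v i) (v (i + 1))) → v L = v 0 →
      ∀ B : ℕ, 1 ≤ B → B ≤ L →
      ∃ a b : ℕ, b ≤ L ∧ v a = v b ∧ B ≤ b - a ∧ b - a ≤ 2 * B := by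
  intro L
  induction L using Nat.strong_induction_on with
  | _ L IH =>
    intro v hadj hclose B hB1 hBL
    have hL1 : 1 ≤ L := le_trans hB1 hBL
    have hadj0 : G.Adj (v 0) (v 1) := hadj 0 hL1
    have hL2 : 2 ≤ L := by
      rcases Nat.lt_or_ge L 2 with h | h
      · exfalso
        have : L = 1 := by omega
        rw [this] at hclose
        exact hadj0.ne' hclose
      · exact h
    -- the edge {v 0, v 1} is a bridge; find the crossing time back
    set G'' : SimpleGraph V := G \ SimpleGraph.fromEdgeSet {s(v 0, v 1)} with hG''
    have h1 : G''.Reachable (v 1) (v 1) := Reachable.refl _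
    have hLnot : ¬ G''.Reachable (v 1) (v L) := by
      rw [hclose]
      intro h
      exact hbr (v 0) (v 1) hadj0 h.symm
    obtain ⟨s, hs1, hsL, hPs, hPs1⟩ :=
      stmt13_ivt (P := fun t => G''.Reachable (v 1) (v t)) L 1 hL1 h1 hLnot
    have hadjs : G.Adj (v s) (v (s + 1)) := hadj s hsL
    have hcross : v s = v 1 ∧ v (s + 1) = v 0 := by
      by_cases hedge : s(v s, v (s + 1)) = s(v 0, v 1)
      · rcases Sym2.eq_iff.mp hedge with ⟨h1', h2'⟩ | ⟨h1', h2'⟩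
        · exfalso
          have h := hPs.symm
          rw [h1'] at h
          exact hbr (v 0) (v 1) hadj0 h
        · exact ⟨h1', h2'⟩
      · exfalso
        apply hPs1
        refine hPs.trans (SimpleGraph.Adj.reachable ?_)
        rw [hG'', SimpleGraph.sdiff_adj]
        refine ⟨hadjs, ?_⟩
        rw [SimpleGraph.fromEdgeSet_adj]
        rintro ⟨hmem, -⟩
        exact hedge (by simpa using hmem)
    by_cases hc1 : B ≤ s - 1
    · -- recurse into the inner closed walk v 1 ... v s
      have hlt : s - 1 < L := by omega
      obtain ⟨a, b, hbL', heq, hd1, hd2⟩ :=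
        IH (s - 1) hlt (fun i => v (i + 1))
          (by
            intro i hi
            exact hadj (i + 1) (by omega))
          (by
            show v (s - 1 + 1) = v (0 + 1)
            have h : s - 1 + 1 = s := by omega
            rw [h]
            exact hcross.1)
          B hB1 hc1
      exact ⟨a + 1, b + 1, by omega, heq, by omega, by omega⟩
    by_cases hc2 : B ≤ L - s - 1
    · -- recurse into the outer closed walk v (s+1) ... v L
      have hlt : L - s - 1 < L := by omega
      obtain ⟨a, b, hbL', heq, hd1, hd2⟩ :=
        IH (L - s - 1) hlt (fun i => v (i + (s + 1)))
          (by
            intro i hi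
            show G.Adj (v (i + (s + 1))) (v (i + 1 + (s + 1)))
            have h : i + 1 + (s + 1) = (i + (s + 1)) + 1 := by ring
            rw [h]
            exact hadj (i + (s + 1)) (by omega))
          (by
            show v (L - s - 1 + (s + 1)) = v (0 + (s + 1))
            have h : L - s - 1 + (s + 1) = L := by omega
            have h0 : 0 + (s + 1) = s + 1 := by ring
            rw [h, h0, hclose]
            exact hcross.2.symm)
          B hB1 hc2
      refine ⟨a + (s + 1), b + (s + 1), by omega, ?_, by omega, by omega⟩
      exact heq
    by_cases hc3 : B ≤ s + 1
    · exact ⟨0, s + 1, by omega, hcross.2.symm, by omega, by omega⟩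
    · exact ⟨0, L, le_refl L, hclose.symm, by omega, by omega⟩

/-- There is an absolute constant `C > 0` such that, for any
circulation `φ` on a finite connected symmetric directed multigraph which is a
tree (no loops and `m = 2(n − 1)`), any generalized intersection distance
measure `δ` for `φ`, any arc `e`, and any integer `B ≥ 1`, there is an integer
`x ∈ [B, 2B]` with `δ x e e ≤ C`. -/
theorem stmt_13 : ∃ C : ℝ, 0 < C ∧
    ∀ (V E : Type) [Fintype V] [Fintype E] [Nonempty V]
      (pred succ : E → V) (rev : E → E),
      (∀ e, rev (rev e) = e) →
      (∀ e, pred (rev e) = succ e) →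
      (∀ e, succ (rev e) = pred e) →
      (∀ e, pred e = succ e → rev e = e) →
      -- connectedness of the underlying undirected graph
      (∀ u v : V, Relation.ReflTransGen
        (fun a b => ∃ e, (pred e = a ∧ succ e = b) ∨ (pred e = b ∧ succ e = a)) u v) →
      -- G is a tree: no loops, and m = 2(n − 1)
      (∀ e : E, pred e ≠ succ e) →
      Fintype.card E = 2 * (Fintype.card V - 1) →
      ∀ (φ : Equiv.Perm E), (∀ e, succ e = pred (φ e)) →
      -- δ is a generalized intersection distance measure
      ∀ δ : ℤ → E → E → ℕ,
      (∀ e, δ 0 e e = 0) →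
      (∀ e, δ 1 e (φ e) = 0) →
      (∀ e₁ e₂, pred e₁ = pred e₂ → δ 0 e₁ e₂ ≤ 1) →
      (∀ (x : ℤ) (e₁ e₂ : E), δ (-x) e₂ e₁ = δ x e₁ e₂) →
      (∀ (x y : ℤ) (e₁ e₂ e₃ : E), δ (x + y) e₁ e₃ ≤ δ x e₁ e₂ + δ y e₂ e₃) →
      ∀ (e : E) (B : ℕ), 1 ≤ B →
      ∃ x : ℤ, (B : ℤ) ≤ x ∧ x ≤ 2 * B ∧ (δ x e e : ℝ) ≤ C := by
  classical
  refine ⟨1, one_pos, ?_⟩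
  intro V E _ _ _ pred succ rev hrevrev hprev hsrev hfix hconn hloop hcard φ hφ
    δ hδ0 hδ1 hδ01 hδsymm hδtri e B hB1
  -- the underlying simple graph
  set G' : SimpleGraph V :=
    { Adj := fun a b => a ≠ b ∧ ∃ e, (pred e = a ∧ succ e = b) ∨ (pred e = b ∧ succ e = a)
      symm := ⟨by
        rintro a b ⟨hne, e₀, h | h⟩
        · exact ⟨hne.symm, e₀, Or.inr h⟩
        · exact ⟨hne.symm, e₀, Or.inl h⟩⟩
      loopless := ⟨fun a h => h.1 rfl⟩ } with hG'def
  letI : Fintype G'.edgeSet := Fintype.ofFinite _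
  -- G' is connected
  have hG'conn : G'.Connected := by
    rw [SimpleGraph.connected_iff]
    refine ⟨fun x y => ?_, ‹Nonempty V›⟩
    rw [SimpleGraph.reachable_iff_reflTransGen]
    refine Relation.ReflTransGen.mono (fun a b hab => ?_) x y (hconn x y)
    obtain ⟨e₀, h⟩ := hab
    have hne : a ≠ b := by
      rcases h with ⟨h1, h2⟩ | ⟨h1, h2⟩
      · rw [← h1, ← h2]; exact hloop e₀
      · rw [← h1, ← h2]; exact (hloop e₀).symm
    exact ⟨hne, e₀, h⟩
  -- counting: G' has at most n - 1 edges
  have hup : G'.edgeFinset.card ≤ Fintype.card V - 1 := by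
    have hmem : ∀ e₀ : E, e₀ ∈ (Finset.univ : Finset E) →
        s(pred e₀, succ e₀) ∈ G'.edgeFinset := by
      intro e₀ _
      rw [SimpleGraph.mem_edgeFinset, SimpleGraph.mem_edgeSet]
      exact ⟨hloop e₀, e₀, Or.inl ⟨rfl, rfl⟩⟩
    have hfib := Finset.card_eq_sum_card_fiberwise hmem
    have hge : ∀ ed ∈ G'.edgeFinset,
        2 ≤ (Finset.univ.filter fun e₀ : E => s(pred e₀, succ e₀) = ed).card := by
      intro ed hed
      induction ed using Sym2.ind with
      | _ a b =>
        rw [SimpleGraph.mem_edgeFinset, SimpleGraph.mem_edgeSet] at hed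
        obtain ⟨hne, e₀, h⟩ := hed
        have hmem0 : s(pred e₀, succ e₀) = s(a, b) := by
          rcases h with ⟨h1, h2⟩ | ⟨h1, h2⟩
          · rw [h1, h2]
          · rw [h1, h2]; exact Sym2.eq_swap
        have hmem1 : s(pred (rev e₀), succ (rev e₀)) = s(a, b) := by
          rw [hprev, hsrev, Sym2.eq_swap]
          exact hmem0
        have hne0 : e₀ ≠ rev e₀ := by
          intro h'
          have : pred e₀ = succ e₀ := by
            conv_lhs => rw [h']
            rw [hprev]
          exact hloop e₀ this
        have hsub : ({e₀, rev e₀} : Finset E) ⊆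
            Finset.univ.filter fun f : E => s(pred f, succ f) = s(a, b) := by
          intro f hf
          rcases Finset.mem_insert.mp hf with rfl | hf'
          · exact Finset.mem_filter.mpr ⟨Finset.mem_univ _, hmem0⟩
          · rw [Finset.mem_singleton] at hf'
            subst hf'
            exact Finset.mem_filter.mpr ⟨Finset.mem_univ _, hmem1⟩
        calc 2 = ({e₀, rev e₀} : Finset E).card := (Finset.card_pair hne0).symm
          _ ≤ _ := Finset.card_le_card hsub
    have h2c : 2 * G'.edgeFinset.card ≤ Fintype.card E := by
      calc 2 * G'.edgeFinset.card = ∑ _ed ∈ G'.edgeFinset, 2 := by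
            rw [Finset.sum_const, smul_eq_mul, mul_comm]
        _ ≤ ∑ ed ∈ G'.edgeFinset,
              (Finset.univ.filter fun e₀ : E => s(pred e₀, succ e₀) = ed).card :=
            Finset.sum_le_sum hge
        _ = (Finset.univ : Finset E).card := hfib.symm
        _ = Fintype.card E := Finset.card_univ
    rw [hcard] at h2c
    omega
  -- every edge of G' is a bridge
  have hbr : ∀ a b : V, G'.Adj a b →
      ¬ (G' \ SimpleGraph.fromEdgeSet {s(a, b)}).Reachable a b := by
    intro a b hab hreach
    set G'' : SimpleGraph V := G' \ SimpleGraph.fromEdgeSet {s(a, b)} with hG''def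
    letI : Fintype G''.edgeSet := Fintype.ofFinite _
    have hstep : ∀ x y : V, G'.Adj x y → G''.Reachable x y := by
      intro x y hxy
      by_cases h : s(x, y) = s(a, b)
      · rcases Sym2.eq_iff.mp h with ⟨h1, h2⟩ | ⟨h1, h2⟩
        · rw [h1, h2]; exact hreach
        · rw [h1, h2]; exact hreach.symm
      · refine SimpleGraph.Adj.reachable ?_
        rw [hG''def, SimpleGraph.sdiff_adj]
        refine ⟨hxy, ?_⟩
        rw [SimpleGraph.fromEdgeSet_adj]
        rintro ⟨hmem, -⟩
        exact h (by simpa using hmem)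
    have hconn'' : G''.Connected := by
      rw [SimpleGraph.connected_iff]
      refine ⟨fun x y => ?_, ‹Nonempty V›⟩
      have h := hG'conn.preconnected x y
      rw [SimpleGraph.reachable_iff_reflTransGen] at h
      induction h with
      | refl => exact Reachable.refl _
      | tail _ h2 ih => exact ih.trans (hstep _ _ h2)
    have hlow := stmt13_LB G'' hconn''
    have hss : G''.edgeFinset ⊂ G'.edgeFinset := by
      refine Finset.ssubset_iff_of_subset
        (SimpleGraph.edgeFinset_mono sdiff_le) |>.mpr ?_
      refine ⟨s(a, b), SimpleGraph.mem_edgeFinset.mpr hab, fun hmem2 => ?_⟩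
      have hadj2 : (G' \ SimpleGraph.fromEdgeSet {s(a, b)}).Adj a b := by
        rw [SimpleGraph.mem_edgeFinset, SimpleGraph.mem_edgeSet] at hmem2
        exact hmem2
      rw [SimpleGraph.sdiff_adj] at hadj2
      refine hadj2.2 ?_
      rw [SimpleGraph.fromEdgeSet_adj]
      exact ⟨by simp, hab.ne⟩
    have hlt := Finset.card_lt_card hss
    omega
  -- δ chains along the orbit of φ
  have zero_chain : ∀ (k : ℕ) (f : E), δ (k : ℤ) f ((φ ^ k) f) = 0 := by
    intro k
    induction k with
    | zero => intro f; simpa using hδ0 f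
    | succ k ih =>
      intro f
      have h1 : δ 1 ((φ ^ k) f) ((φ ^ (k + 1)) f) = 0 := by
        have := hδ1 ((φ ^ k) f)
        have heq : φ ((φ ^ k) f) = (φ ^ (k + 1)) f := by
          rw [pow_succ']
          rfl
        rwa [heq] at this
      have htri := hδtri (k : ℤ) 1 f ((φ ^ k) f) ((φ ^ (k + 1)) f)
      rw [ih f, h1] at htri
      have hcast : ((k + 1 : ℕ) : ℤ) = (k : ℤ) + 1 := by push_cast; ring
      rw [hcast]
      omega
  -- key inequality: equal start vertices along the orbit give small δ
  have key : ∀ a b : ℕ, pred ((φ ^ a) e) = pred ((φ ^ b) e) →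
      δ ((b : ℤ) - a) e e ≤ 1 := by
    intro a b hpq
    have h1 := hδtri (b : ℤ) (-(a : ℤ)) e ((φ ^ b) e) e
    have h2 := hδtri 0 (-(a : ℤ)) ((φ ^ b) e) ((φ ^ a) e) e
    have h3 : δ (-(a : ℤ)) ((φ ^ a) e) e = δ (a : ℤ) e ((φ ^ a) e) := hδsymm _ _ _
    have h4 : δ 0 ((φ ^ b) e) ((φ ^ a) e) ≤ 1 := hδ01 _ _ hpq.symm
    have h5 := zero_chain a e
    have h6 := zero_chain b e
    have e1 : (b : ℤ) + (-(a : ℤ)) = (b : ℤ) - a := by ring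
    have e2 : (0 : ℤ) + (-(a : ℤ)) = -(a : ℤ) := by ring
    rw [e1] at h1
    rw [e2] at h2
    omega
  -- the period of the orbit
  set p := orderOf φ with hpdef
  have hppos : 0 < p := orderOf_pos φ
  have hφp : φ ^ p = 1 := pow_orderOf_eq_one φ
  by_cases hBp : B ≤ p
  · -- use the walk lemma on the orbit walk of length p
    have hwadj : ∀ i, i < p → G'.Adj (pred ((φ ^ i) e)) (pred ((φ ^ (i + 1)) e)) := by
      intro i _
      have hnext : pred ((φ ^ (i + 1)) e) = succ ((φ ^ i) e) := by
        rw [pow_succ', Equiv.Perm.mul_apply]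
        exact (hφ ((φ ^ i) e)).symm
      rw [hnext]
      exact ⟨hloop _, (φ ^ i) e, Or.inl ⟨rfl, rfl⟩⟩
    have hwclose : pred ((φ ^ p) e) = pred ((φ ^ 0) e) := by
      rw [hφp, pow_zero]
    obtain ⟨a, b, hbp, heq, hd1, hd2⟩ :=
      stmt13_walk G' hbr p (fun t => pred ((φ ^ t) e)) hwadj hwclose B hB1 hBp
    refine ⟨(b : ℤ) - a, by omega, by omega, ?_⟩
    have := key a b heq
    exact_mod_cast this
  · -- take a multiple of the period inside the window
    push_neg at hBp
    set k := B / p + 1 with hkdef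
    have hq : p * k = p * (B / p) + p := by rw [hkdef, Nat.mul_add, Nat.mul_one]
    have hdiv : p * (B / p) + B % p = B := Nat.div_add_mod B p
    have hmod : B % p < p := Nat.mod_lt B hppos
    have hlow : B < p * k := by
      calc B = p * (B / p) + B % p := hdiv.symm
        _ < p * (B / p) + p := Nat.add_lt_add_left hmod _
        _ = p * k := hq.symm
    have hple : p * (B / p) ≤ B := by
      calc p * (B / p) = p * (B / p) + 0 := by ring
        _ ≤ p * (B / p) + B % p := Nat.add_le_add_left (Nat.zero_le _) _
        _ = B := hdiv
    have hhigh : p * k ≤ 2 * B := by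
      calc p * k = p * (B / p) + p := hq
        _ ≤ B + B := Nat.add_le_add hple (le_of_lt hBp)
        _ = 2 * B := by ring
    have hpow : (φ ^ (p * k)) e = e := by
      rw [pow_mul, hφp, one_pow]
      rfl
    have hval := zero_chain (p * k) e
    rw [hpow] at hval
    refine ⟨((p * k : ℕ) : ℤ), by exact_mod_cast hlow.le, by exact_mod_cast hhigh, ?_⟩
    rw [hval]
    norm_num
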